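/- Let (X,d) be a metric space, f : X → X a map, and R : X → X an isometric involution (R ∘ R = id and d(R x, R y) = d(x,y) for all x,y) commuting with f (R ∘ f = f ∘ R). Define the set-valued map F : X → Set X by F(x) = {f(x), R(f(x))}. If f has the periodic shadowing property (for every ε > 0 there exists δ > 0 such that every periodic sequence (x_n) with d(f(x_n), x_{n+1}) < δ for all n is ε-shadowed by the forward orbit (f^n(z)) of some periodic point z of f), then F has the set-valued periodic shadowing property. -/

import Mathlib

/-- An orbit of a set-valued map `F`: a sequence with `z (n+1) ∈ F (z n)` for all `n`. -/
def IsOrbit {X : Type*} (F : X → Set X) (z : ℕ → X) : Prop :=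
  ∀ n, z (n + 1) ∈ F (z n)

/-- A `δ`-pseudo-orbit of a set-valued map `F`. -/
def IsPseudoOrbit {X : Type*} [MetricSpace X] (F : X → Set X) (δ : ℝ) (x : ℕ → X) : Prop :=
  ∀ n, Metric.infDist (x (n + 1)) (F (x n)) < δ

/-- A periodic sequence: there is `k ≥ 1` with `x (n + k) = x n` for all `n`. -/
def IsPeriodicSeq {X : Type*} (x : ℕ → X) : Prop :=
  ∃ k : ℕ, 1 ≤ k ∧ ∀ n, x (n + k) = x n

/-- The periodic shadowing property for a set-valued map. -/
def SVPeriodicShadowing {X : Type*} [MetricSpace X] (F : X → Set X) : Prop :=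
  ∀ ε > (0 : ℝ), ∃ δ > (0 : ℝ), ∀ x : ℕ → X, IsPseudoOrbit F δ x → IsPeriodicSeq x →
    ∃ z : ℕ → X, IsOrbit F z ∧ IsPeriodicSeq z ∧ ∀ n, dist (z n) (x n) < ε

private def Rb {X : Type*} (R : X → X) : Bool → X → X
  | false => id
  | true => R

private def sseq (t : ℕ → Bool) : ℕ → Bool
  | 0 => false
  | n + 1 => Bool.xor (sseq t n) (t n)

private lemma Rb_iso {X : Type*} [MetricSpace X] {R : X → X}
    (hRiso : ∀ x y, dist (R x) (R y) = dist x y) (b : Bool) (p q : X) :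
    dist (Rb R b p) (Rb R b q) = dist p q := by
  cases b <;> simp [Rb, hRiso]

private lemma Rb_swap {X : Type*} [MetricSpace X] {R : X → X}
    (hRR : ∀ x, R (R x) = x)
    (hRiso : ∀ x y, dist (R x) (R y) = dist x y) (b : Bool) (p q : X) :
    dist (Rb R b p) q = dist p (Rb R b q) := by
  cases b
  · rfl
  · show dist (R p) q = dist p (R q)
    conv_lhs => rw [← hRR q]
    rw [hRiso]

private lemma Rb_xor {X : Type*} {R : X → X} (hRR : ∀ x, R (R x) = x)
    (a b : Bool) (p : X) : Rb R (Bool.xor a b) p = Rb R a (Rb R b p) := by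
  cases a <;> cases b <;> simp [Rb, hRR]

private lemma Rb_comm' {X : Type*} {f R : X → X} (hcomm : ∀ x, R (f x) = f (R x))
    (b : Bool) (p : X) : f (Rb R b p) = Rb R b (f p) := by
  cases b <;> simp [Rb, hcomm]

private lemma xor_rc (a b c : Bool) :
    Bool.xor (Bool.xor a c) b = Bool.xor (Bool.xor a b) c := by cases a <;> cases b <;> cases c <;> rfl

private lemma xor_cc (a c : Bool) : Bool.xor (Bool.xor a c) c = a := by cases a <;> cases c <;> rfl

theorem stmt1 {X : Type*} [MetricSpace X] (f R : X → X)
    (hRR : ∀ x, R (R x) = x)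
    (hRiso : ∀ x y, dist (R x) (R y) = dist x y)
    (hcomm : ∀ x, R (f x) = f (R x))
    (hpshadow : ∀ ε > (0 : ℝ), ∃ δ > (0 : ℝ), ∀ x : ℕ → X,
      (∀ n, dist (f (x n)) (x (n + 1)) < δ) → IsPeriodicSeq x →
      ∃ z : X, (∃ m : ℕ, 1 ≤ m ∧ f^[m] z = z) ∧ ∀ n, dist (f^[n] z) (x n) < ε) :
    SVPeriodicShadowing (fun x => ({f x, R (f x)} : Set X)) := by
  intro ε hε
  obtain ⟨δ, hδpos, hδ⟩ := hpshadow ε hε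
  refine ⟨δ, hδpos, ?_⟩
  rintro x hx ⟨k, hk1, hkp⟩
  set t : ℕ → Bool := fun n => if dist (x (n + 1)) (f (x n)) < δ then false else true with ht
  set s : ℕ → Bool := sseq t with hs
  have hssucc : ∀ n, s (n + 1) = Bool.xor (s n) (t n) := fun n => rfl
  -- key distance estimate
  have key : ∀ n, dist (x (n + 1)) (Rb R (t n) (f (x n))) < δ := by
    intro n
    by_cases h : dist (x (n + 1)) (f (x n)) < δ
    · have htn : t n = false := by simp [ht, h]
      rw [htn]; exact h
    · have htn : t n = true := by simp [ht, h]
      have hne : ({f (x n), R (f (x n))} : Set X).Nonempty := ⟨f (x n), by simp⟩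
      have hinf : Metric.infDist (x (n + 1)) ({f (x n), R (f (x n))} : Set X) < δ := by
        simpa using hx n
      obtain ⟨y, hy, hyd⟩ := (Metric.infDist_lt_iff hne).mp hinf
      rcases hy with hy | hy
      · exact absurd (hy ▸ hyd) h
      · rw [Set.mem_singleton_iff] at hy
        rw [htn]
        show dist (x (n + 1)) (R (f (x n))) < δ
        rwa [← hy]
  -- t is k-periodic
  have htper : ∀ n, t (n + k) = t n := by
    intro n
    have h1 : x (n + k + 1) = x (n + 1) := by
      have := hkp (n + 1)
      rwa [show n + 1 + k = n + k + 1 by omega] at this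
    simp [ht, h1, hkp n]
  -- s satisfies s (n+k) = xor (s n) c
  set c := s k with hc
  have hsk : ∀ n, s (n + k) = Bool.xor (s n) c := by
    intro n
    induction n with
    | zero => simp [hs, sseq, ← hc]; rfl
    | succ n ih =>
      rw [show n + 1 + k = (n + k) + 1 by omega, hssucc, hssucc, ih, htper, xor_rc]
  have hs2k : ∀ n, s (n + 2 * k) = s n := by
    intro n
    rw [show n + 2 * k = (n + k) + k by omega, hsk, hsk, xor_cc]
  -- the corrected sequence y is a δ-pseudo-orbit of f
  set y : ℕ → X := fun n => Rb R (s n) (x n) with hy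
  have hypseudo : ∀ n, dist (f (y n)) (y (n + 1)) < δ := by
    intro n
    have e : dist (f (y n)) (y (n + 1)) = dist (x (n + 1)) (Rb R (t n) (f (x n))) := by
      show dist (f (Rb R (s n) (x n))) (Rb R (s (n + 1)) (x (n + 1))) = _
      rw [Rb_comm' hcomm, hssucc, Rb_xor hRR, Rb_iso hRiso, ← Rb_swap hRR hRiso, dist_comm]
    rw [e]; exact key n
  have hyper : IsPeriodicSeq y := by
    refine ⟨2 * k, by omega, fun n => ?_⟩
    show Rb R (s (n + 2 * k)) (x (n + 2 * k)) = Rb R (s n) (x n)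
    rw [hs2k, show n + 2 * k = (n + k) + k by omega, hkp, hkp]
  obtain ⟨z, ⟨m, hm1, hmz⟩, hz⟩ := hδ y hypseudo hyper
  -- fold back
  set w : ℕ → X := fun n => Rb R (s n) (f^[n] z) with hw
  refine ⟨w, ?_, ?_, ?_⟩
  · intro n
    have hfw : f (w n) = Rb R (s n) (f^[n + 1] z) := by
      show f (Rb R (s n) (f^[n] z)) = _
      rw [Rb_comm' hcomm, Function.iterate_succ_apply']
    have hw1 : w (n + 1) = Rb R (Bool.xor (s n) (t n)) (f^[n + 1] z) := by
      show Rb R (s (n + 1)) (f^[n + 1] z) = _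
      rw [hssucc]
    simp only [Set.mem_insert_iff, Set.mem_singleton_iff]
    cases htn : t n
    · left
      rw [hw1, htn, hfw, Bool.xor_false]
    · right
      rw [hw1, htn, hfw, show Bool.xor (s n) true = Bool.xor true (s n) from Bool.xor_comm _ _,
        Rb_xor hRR]
      rfl
  · -- periodicity of w with period 2*k*m
    have hs2 : ∀ j n, s (n + 2 * k * j) = s n := by
      intro j
      induction j with
      | zero => simp
      | succ j ih =>
        intro n
        rw [show n + 2 * k * (j + 1) = (n + 2 * k) + 2 * k * j by ring, ih, hs2k]
    have hzp : ∀ j, f^[m * j] z = z := by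
      intro j
      induction j with
      | zero => simp
      | succ j ih =>
        rw [show m * (j + 1) = m * j + m by ring, Function.iterate_add_apply, hmz, ih]
    refine ⟨2 * k * m, ?_, fun n => ?_⟩
    · have : 1 ≤ 2 * k := by omega
      calc 1 ≤ 2 * k := this
        _ = 2 * k * 1 := by ring
        _ ≤ 2 * k * m := Nat.mul_le_mul_left _ hm1
    · show Rb R (s (n + 2 * k * m)) (f^[n + 2 * k * m] z) = Rb R (s n) (f^[n] z)
      rw [hs2 m n, show n + 2 * k * m = n + m * (2 * k) by ring,
        Function.iterate_add_apply, hzp (2 * k)]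
  · intro n
    show dist (Rb R (s n) (f^[n] z)) (x n) < ε
    rw [Rb_swap hRR hRiso]
    exact hz n
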